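/- Let d ≥ 2, let P be a stationary and ergodic probability measure on (Ω,F), let r ∈ [1,∞), and let u : Ω × ℤ^d → ℝ be a measurable function with u ∈ Stat_P(ℝ), u(·,0) ∈ L^r(Ω,ℝ), and such that for P-almost every ω, (Δ u(ω,·))(x) = 0 for all x ∈ ℤ^d. Then for P-almost every ω and every x ∈ ℤ^d, u(ω,x) = E_P[u(·,0)]. -/

import Mathlib

set_option synthInstance.maxHeartbeats 1000000
set_option maxHeartbeats 1000000


open MeasureTheory Filter
open scoped ENNReal Classical

noncomputable section

/-- Points of the lattice `ℤ^d`. -/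
abbrev Zd (d : ℕ) := Fin d → ℤ

/-- The `i`-th standard unit vector of `ℤ^d`. -/
def unitVec {d : ℕ} (i : Fin d) : Zd d := fun j => if j = i then 1 else 0

/-- Environments: a positive conductance for every (unoriented nearest-neighbour) edge,
where the edge `{x, x + e i}` is encoded by the pair `(x, i)`. -/
abbrev Env (d : ℕ) := ((Fin d → ℤ) × Fin d) → {r : ℝ // 0 < r}

/-- The conductance of the edge `{x, x + e i}` in the environment `ω`, as a real number. -/
def cval {d : ℕ} (ω : Env d) (x : Zd d) (i : Fin d) : ℝ := (ω (x, i)).1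

/-- Nearest-neighbour adjacency on `ℤ^d`. -/
def Adj {d : ℕ} (x y : Zd d) : Prop :=
  ∃ i : Fin d, y = x + unitVec i ∨ x = y + unitVec i

/-- The conductance `ω_{xy}` between two nearest neighbours `x ∼ y` (and `0` otherwise). -/
def econd {d : ℕ} (ω : Env d) (x y : Zd d) : ℝ :=
  ∑ i : Fin d, ((if y = x + unitVec i then cval ω x i else 0)
    + (if x = y + unitVec i then cval ω y i else 0))

/-- Discrete gradient `(∇_i u)(x) = u(x+e_i) - u(x)`. -/
def dGrad {d : ℕ} (i : Fin d) (f : Zd d → ℝ) (x : Zd d) : ℝ :=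
  f (x + unitVec i) - f x

/-- Discrete backward gradient `(∇_i^* u)(x) = u(x-e_i) - u(x)`. -/
def dGradStar {d : ℕ} (i : Fin d) (f : Zd d → ℝ) (x : Zd d) : ℝ :=
  f (x - unitVec i) - f x

/-- Discrete divergence `(∇^* ⬝ F)(x) = ∑ i, (F_i(x-e_i) - F_i(x))`. -/
def divStar {d : ℕ} (F : Zd d → Fin d → ℝ) (x : Zd d) : ℝ :=
  ∑ i : Fin d, (F (x - unitVec i) i - F x i)

/-- Discrete Laplacian `Δu = -∑ i, ∇_i^* ∇_i u`. -/
def lap {d : ℕ} (f : Zd d → ℝ) (x : Zd d) : ℝ :=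
  - ∑ i : Fin d, dGradStar i (dGrad i f) x

/-- The open discrete box `D_R = {x : |x|_∞ < R}`. -/
def boxD (d R : ℕ) : Finset (Zd d) :=
  Fintype.piFinset fun _ => Finset.Ioo (-(R : ℤ)) (R : ℤ)

/-- The closed discrete box `D̄_R = {x : |x|_∞ ≤ R}`. -/
def boxC (d R : ℕ) : Finset (Zd d) :=
  Fintype.piFinset fun _ => Finset.Icc (-(R : ℤ)) (R : ℤ)

/-- The discrete boundary `∂D_R = {x : |x|_∞ = R}`. -/
def bdry (d R : ℕ) : Finset (Zd d) := boxC d R \ boxD d R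

/-- The reduced boundary `∂̃D_R` of points of `∂D_R` having a neighbour in `D_R`. -/
def tbdry (d R : ℕ) : Finset (Zd d) :=
  (bdry d R).filter fun x => ∃ y ∈ boxD d R, Adj x y

/-- The oriented edge set `E_R = {(x,y) : x ∼ y, |x+y|_∞ < 2R}`. -/
def ER (d R : ℕ) : Finset (Zd d × Zd d) :=
  ((boxC d R) ×ˢ (boxC d R)).filter fun e =>
    Adj e.1 e.2 ∧ ∀ i, |e.1 i + e.2 i| < 2 * (R : ℤ)

/-- The normal edges `E_R^{nor} = {(x,y) : x ∈ D_R, y ∈ ∂D_R, x ∼ y}`. -/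
def Enor (d R : ℕ) : Finset (Zd d × Zd d) :=
  ((boxD d R) ×ˢ (bdry d R)).filter fun e => Adj e.1 e.2

/-- The tangential edges `E_R^{tan} = {(x,y) : x, y ∈ ∂D_R, x ∼ y}`. -/
def Etan (d R : ℕ) : Finset (Zd d × Zd d) :=
  ((bdry d R) ×ˢ (bdry d R)).filter fun e => Adj e.1 e.2

/-- Normalized `ℓ^r` norm `⦀u⦀_{r,A}` on a finite set. -/
def avNorm {V : Type*} (r : ℝ) (A : Finset V) (u : V → ℝ) : ℝ :=
  ((∑ x ∈ A, |u x| ^ r) / (A.card : ℝ)) ^ (1 / r)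

/-- Sup norm `⦀u⦀_{∞,A}` on a finite set. -/
def supNorm {V : Type*} (A : Finset V) (u : V → ℝ) : ℝ :=
  ⨆ x ∈ A, |u x|

/-- Normalized `ℓ^r` norm for an extended exponent `r ∈ [1,∞]`. -/
def avNormE {V : Type*} (r : ℝ≥0∞) (A : Finset V) (u : V → ℝ) : ℝ :=
  if r = ∞ then supNorm A u else avNorm r.toReal A u

/-- The exponent `2p/(p-1)`, with the convention that it equals `2` for `p = ∞`. -/
def dualExp (p : ℝ≥0∞) : ℝ :=
  if p = ∞ then 2 else 2 * p.toReal / (p.toReal - 1)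

/-- The exponent `2p/(p+1)`, with the convention that it equals `2` for `p = ∞`. -/
def coExp (p : ℝ≥0∞) : ℝ :=
  if p = ∞ then 2 else 2 * p.toReal / (p.toReal + 1)

/-- Euclidean norm on `ℝ^d`. -/
def vecNorm {d : ℕ} (v : Fin d → ℝ) : ℝ := Real.sqrt (∑ i, v i ^ 2)

/-- The translation `τ_a` acting on environments. -/
def shiftEnv {d : ℕ} (a : Zd d) (ω : Env d) : Env d := fun e => ω (e.1 + a, e.2)

/-- Stationarity of a measure on environments. -/
def Stationary {d : ℕ} (P : Measure (Env d)) : Prop :=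
  ∀ a : Zd d, MeasurePreserving (shiftEnv a) P P

/-- Ergodicity of a measure on environments w.r.t. the translations. -/
def ErgodicEnv {d : ℕ} (P : Measure (Env d)) : Prop :=
  ∀ A : Set (Env d), MeasurableSet A → (∀ a : Zd d, shiftEnv a ⁻¹' A = A) →
    P A = 0 ∨ P A = 1

/-- Stationary (`Stat_P`) random fields. -/
def StatP {d : ℕ} {E : Type*} [MeasurableSpace E] (P : Measure (Env d))
    (f : Env d → Zd d → E) : Prop :=
  Measurable (Function.uncurry f) ∧
    ∀ᵐ ω ∂P, ∀ x : Zd d, f ω x = f (shiftEnv x ω) 0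

/-- The horizontal derivative `D_i` on functions of the environment. -/
def Dop {d : ℕ} (i : Fin d) (ζ : Env d → ℝ) : Env d → ℝ :=
  fun ω => ζ (shiftEnv (unitVec i) ω) - ζ ω

/-- The horizontal derivative `D_i^*` on functions of the environment. -/
def DopStar {d : ℕ} (i : Fin d) (ζ : Env d → ℝ) : Env d → ℝ :=
  fun ω => ζ (shiftEnv (-(unitVec i)) ω) - ζ ω

/-- The reflection of `ℤ^d` flipping the `j`-th coordinate. -/
def reflPt {d : ℕ} (j : Fin d) (x : Zd d) : Zd d := fun k => if k = j then -x k else x k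

/-- The reflection `ρ_j` acting on environments. -/
def reflEnv {d : ℕ} (j : Fin d) (ω : Env d) : Env d :=
  fun e => ω (if e.2 = j then reflPt j e.1 - unitVec j else reflPt j e.1, e.2)

section AuxProof

open Filter MeasureTheory

variable {d : ℕ}

lemma shiftEnv_comp (a b : Zd d) (ω : Env d) :
    shiftEnv a (shiftEnv b ω) = shiftEnv (a + b) ω := by
  funext e; simp [shiftEnv, add_assoc]

lemma shiftEnv_zero (ω : Env d) : shiftEnv (0 : Zd d) ω = ω := by
  funext e; simp [shiftEnv]

lemma measurable_shiftEnv (a : Zd d) : Measurable (shiftEnv a : Env d → Env d) :=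
  measurable_pi_lambda _ fun _ => measurable_pi_apply _

/-- `shiftEnv a` as a measurable equivalence. -/
def shiftEquiv (a : Zd d) : Env d ≃ᵐ Env d :=
  { toFun := shiftEnv a
    invFun := shiftEnv (-a)
    left_inv := fun ω => by rw [shiftEnv_comp]; simp [shiftEnv_zero]
    right_inv := fun ω => by rw [shiftEnv_comp]; simp [shiftEnv_zero]
    measurable_toFun := measurable_shiftEnv a
    measurable_invFun := measurable_shiftEnv (-a) }

/-- A function invariant under the generating shifts is invariant under all shifts. -/
lemma shift_inv_all {α : Type*} {h : Env d → α}
    (hgen : ∀ i : Fin d, ∀ ω, h (shiftEnv (unitVec i) ω) = h ω) :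
    ∀ a : Zd d, ∀ ω, h (shiftEnv a ω) = h ω := by
  set Q : Zd d → Prop := fun a => ∀ ω, h (shiftEnv a ω) = h ω with hQdef
  have hQ0 : Q 0 := fun ω => by rw [shiftEnv_zero]
  have hQadd : ∀ a b : Zd d, Q a → Q b → Q (a + b) := by
    intro a b ha hb ω
    rw [← shiftEnv_comp, ha, hb]
  have hQneg : ∀ a : Zd d, Q a → Q (-a) := by
    intro a ha ω
    have h2 := ha (shiftEnv (-a) ω)
    rw [shiftEnv_comp, add_neg_cancel, shiftEnv_zero] at h2
    exact h2.symm
  have hQsmul : ∀ (n : ℤ) (i : Fin d), Q (n • unitVec i) := by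
    intro n i
    induction n using Int.induction_on with
    | zero => simpa using hQ0
    | succ k ih =>
      have h2 := hQadd _ _ ih (hgen i)
      have h3 : ((k : ℤ) + 1) • unitVec i = (k : ℤ) • unitVec i + unitVec i := by
        rw [add_smul, one_smul]
      rw [h3]; exact h2
    | pred k ih =>
      have h2 := hQadd _ _ ih (hQneg _ (hgen i))
      have h3 : (-(k : ℤ) - 1) • unitVec i = (-(k : ℤ)) • unitVec i + -unitVec i := by
        rw [sub_smul, one_smul, sub_eq_add_neg]
      rw [h3]; exact h2
  intro a
  have ha : a = ∑ i : Fin d, a i • unitVec i := by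
    funext j
    simp [unitVec, Finset.sum_apply, Finset.sum_ite_eq]
  rw [ha]
  exact Finset.sum_induction _ Q hQadd hQ0 (fun i _ => hQsmul (a i) i)

/-- An a.e.-invariance version of the previous lemma. -/
lemma shift_ae_inv_all {P : Measure (Env d)} (hstat : Stationary P) {g : Env d → ℝ}
    (hgen : ∀ i : Fin d, (fun ω => g (shiftEnv (unitVec i) ω)) =ᵐ[P] g)
    (hgen' : ∀ i : Fin d, (fun ω => g (shiftEnv (-(unitVec i)) ω)) =ᵐ[P] g) :
    ∀ a : Zd d, (fun ω => g (shiftEnv a ω)) =ᵐ[P] g := by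
  set Q : Zd d → Prop := fun a => (fun ω => g (shiftEnv a ω)) =ᵐ[P] g with hQdef
  have hQ0 : Q 0 := by
    apply Filter.EventuallyEq.of_eq
    funext ω; rw [shiftEnv_zero]
  have hQadd : ∀ a b : Zd d, Q a → Q b → Q (a + b) := by
    intro a b ha hb
    have h2 : (fun ω => g (shiftEnv a ω)) ∘ shiftEnv b =ᵐ[P] g ∘ shiftEnv b :=
      (hstat b).quasiMeasurePreserving.ae_eq_comp ha
    have h3 : ((fun ω => g (shiftEnv a ω)) ∘ shiftEnv b) = fun ω => g (shiftEnv (a + b) ω) := by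
      funext ω; simp [Function.comp, shiftEnv_comp]
    rw [h3] at h2
    exact h2.trans hb
  have hQneg : ∀ a : Zd d, Q a → Q (-a) := by
    intro a ha
    have h2 : (fun ω => g (shiftEnv a ω)) ∘ shiftEnv (-a) =ᵐ[P] g ∘ shiftEnv (-a) :=
      (hstat (-a)).quasiMeasurePreserving.ae_eq_comp ha
    have h3 : ((fun ω => g (shiftEnv a ω)) ∘ shiftEnv (-a)) = g := by
      funext ω
      simp only [Function.comp_apply, shiftEnv_comp, add_neg_cancel, shiftEnv_zero]
    rw [h3] at h2
    exact h2.symm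
  have hQsmul : ∀ (n : ℤ) (i : Fin d), Q (n • unitVec i) := by
    intro n i
    induction n using Int.induction_on with
    | zero => simpa using hQ0
    | succ k ih =>
      have h2 := hQadd _ _ ih (hgen i)
      have h3 : ((k : ℤ) + 1) • unitVec i = (k : ℤ) • unitVec i + unitVec i := by
        rw [add_smul, one_smul]
      rw [h3]; exact h2
    | pred k ih =>
      have h2 := hQadd _ _ ih (by simpa using hQneg _ (hgen i))
      have h3 : (-(k : ℤ) - 1) • unitVec i = (-(k : ℤ)) • unitVec i + -unitVec i := by
        rw [sub_smul, one_smul, sub_eq_add_neg]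
      rw [h3]; exact h2
  intro a
  have ha : a = ∑ i : Fin d, a i • unitVec i := by
    funext j
    simp [unitVec, Finset.sum_apply, Finset.sum_ite_eq]
  rw [ha]
  exact Finset.sum_induction _ Q hQadd hQ0 (fun i _ => hQsmul (a i) i)

/-- The `k`-th unit vector (indexed by `ℕ`; zero if `k ≥ d`). -/
def uvn (d k : ℕ) : Zd d := fun j => if (j : ℕ) = k then 1 else 0

lemma uvn_eq (i : Fin d) : uvn d (i : ℕ) = unitVec i := by
  funext j
  simp [uvn, unitVec, Fin.val_inj]

/-- Iterated limsup regularization. -/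
noncomputable def itL (χ : Env d → ℝ≥0∞) : ℕ → Env d → ℝ≥0∞
  | 0 => χ
  | (k + 1) => fun ω =>
      limsup (fun n : ℕ => itL χ k (shiftEnv ((n : ℤ) • uvn d k) ω)) atTop

lemma itL_measurable {χ : Env d → ℝ≥0∞} (hχ : Measurable χ) (k : ℕ) :
    Measurable (itL χ k) := by
  induction k with
  | zero => exact hχ
  | succ k ih => exact Measurable.limsup fun n => ih.comp (measurable_shiftEnv _)

lemma itL_shift {χ : Env d → ℝ≥0∞} :
    ∀ k j : ℕ, j < k → ∀ ω : Env d,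
      itL χ k (shiftEnv (uvn d j) ω) = itL χ k ω := by
  intro k
  induction k with
  | zero => intro j hj; omega
  | succ k ih =>
    intro j hj ω
    rcases Nat.lt_succ_iff_lt_or_eq.mp hj with hj' | hj'
    · show limsup _ atTop = limsup _ atTop
      congr 1
      funext n
      rw [shiftEnv_comp, add_comm, ← shiftEnv_comp]
      exact ih j hj' _
    · subst hj'
      show limsup (fun n : ℕ =>
        itL χ j (shiftEnv ((n : ℤ) • uvn d j) (shiftEnv (uvn d j) ω))) atTop = _
      have heq : (fun n : ℕ =>
          itL χ j (shiftEnv ((n : ℤ) • uvn d j) (shiftEnv (uvn d j) ω)))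
          = fun n : ℕ => itL χ j (shiftEnv (((n + 1 : ℕ) : ℤ) • uvn d j) ω) := by
        funext n
        rw [shiftEnv_comp]
        congr 2
        push_cast
        rw [add_smul, one_smul]
      rw [heq]
      exact limsup_nat_add (fun n : ℕ => itL χ j (shiftEnv ((n : ℤ) • uvn d j) ω)) 1

lemma itL_ae_eq {P : Measure (Env d)} (hstat : Stationary P) {χ : Env d → ℝ≥0∞}
    (hinv : ∀ a : Zd d, (fun ω => χ (shiftEnv a ω)) =ᵐ[P] χ) (k : ℕ) :
    itL χ k =ᵐ[P] χ := by
  induction k with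
  | zero => exact Filter.EventuallyEq.rfl
  | succ k ih =>
    have hb : ∀ n : ℕ, (fun ω => itL χ k (shiftEnv ((n : ℤ) • uvn d k) ω)) =ᵐ[P] χ := by
      intro n
      have h1 : itL χ k ∘ shiftEnv ((n : ℤ) • uvn d k) =ᵐ[P]
          χ ∘ shiftEnv ((n : ℤ) • uvn d k) :=
        (hstat ((n : ℤ) • uvn d k)).quasiMeasurePreserving.ae_eq_comp ih
      exact h1.trans (hinv _)
    have hball := ae_all_iff.mpr hb
    filter_upwards [hball] with ω hω
    show limsup (fun n : ℕ => itL χ k (shiftEnv ((n : ℤ) • uvn d k) ω)) atTop = χ ω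
    have heq : (fun n : ℕ => itL χ k (shiftEnv ((n : ℤ) • uvn d k) ω))
        = fun _ : ℕ => χ ω := funext hω
    rw [heq, limsup_const]

/-- Ergodicity applies to sets that are only a.e. invariant. -/
lemma erg_dichotomy {P : Measure (Env d)} [IsProbabilityMeasure P]
    (hstat : Stationary P) (herg : ErgodicEnv P)
    {A : Set (Env d)} (hA : MeasurableSet A)
    (hinv : ∀ a : Zd d, ∀ᵐ ω ∂P, (shiftEnv a ω ∈ A ↔ ω ∈ A)) :
    P A = 0 ∨ P A = 1 := by
  classical
  set χ : Env d → ℝ≥0∞ := A.indicator (fun _ => 1) with hχdef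
  have hχm : Measurable χ := measurable_const.indicator hA
  have hχinv : ∀ a : Zd d, (fun ω => χ (shiftEnv a ω)) =ᵐ[P] χ := by
    intro a
    filter_upwards [hinv a] with ω hω
    by_cases h : ω ∈ A
    · simp [hχdef, Set.indicator_apply, h, hω.mpr h]
    · have h2 : shiftEnv a ω ∉ A := fun hh => h (hω.mp hh)
      simp [hχdef, Set.indicator_apply, h, h2]
  set h : Env d → ℝ≥0∞ := itL χ d with hhdef
  have hhm : Measurable h := itL_measurable hχm d
  have hhinv : ∀ (a : Zd d) (ω : Env d), h (shiftEnv a ω) = h ω := by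
    apply shift_inv_all
    intro i ω
    have h2 := itL_shift (χ := χ) d (i : ℕ) i.isLt ω
    rwa [uvn_eq] at h2
  have hae : h =ᵐ[P] χ := itL_ae_eq hstat hχinv d
  set B : Set (Env d) := h ⁻¹' {1} with hBdef
  have hBm : MeasurableSet B := hhm (measurableSet_singleton 1)
  have hBinv : ∀ a : Zd d, shiftEnv a ⁻¹' B = B := by
    intro a
    ext ω
    simp [hBdef, hhinv a ω]
  have hPBA : P B = P A := by
    apply measure_congr
    rw [Filter.eventuallyEq_set]
    filter_upwards [hae] with ω hω
    simp only [hBdef, Set.mem_preimage, Set.mem_singleton_iff, hω]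
    by_cases hωA : ω ∈ A
    · simp [hχdef, Set.indicator_apply, hωA]
    · simp [hχdef, Set.indicator_apply, hωA]
  rcases herg B hBm hBinv with h0 | h1
  · exact Or.inl (by rw [← hPBA]; exact h0)
  · exact Or.inr (by rw [← hPBA]; exact h1)

/-- Cauchy–Schwarz-type inequality. -/
lemma one_add_mul_le_sqrt (x y : ℝ) :
    1 + x * y ≤ Real.sqrt (1 + x ^ 2) * Real.sqrt (1 + y ^ 2) := by
  calc 1 + x * y ≤ |1 + x * y| := le_abs_self _
    _ = Real.sqrt ((1 + x * y) ^ 2) := (Real.sqrt_sq_eq_abs _).symm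
    _ ≤ Real.sqrt ((1 + x ^ 2) * (1 + y ^ 2)) :=
        Real.sqrt_le_sqrt (by nlinarith [sq_nonneg (x - y)])
    _ = Real.sqrt (1 + x ^ 2) * Real.sqrt (1 + y ^ 2) :=
        Real.sqrt_mul (by positivity) _

/-- Tangent line inequality for `t ↦ √(1+t²)`. -/
lemma tangent_le (x y : ℝ) :
    Real.sqrt (1 + y ^ 2) + y * (x - y) / Real.sqrt (1 + y ^ 2) ≤ Real.sqrt (1 + x ^ 2) := by
  have hy : 0 < Real.sqrt (1 + y ^ 2) := Real.sqrt_pos.mpr (by positivity)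
  have hsq : Real.sqrt (1 + y ^ 2) ^ 2 = 1 + y ^ 2 := Real.sq_sqrt (by positivity)
  have h1 : Real.sqrt (1 + y ^ 2) + y * (x - y) / Real.sqrt (1 + y ^ 2)
      = (1 + x * y) / Real.sqrt (1 + y ^ 2) := by
    field_simp
    linarith [hsq]
  rw [h1, div_le_iff₀ hy]
  exact one_add_mul_le_sqrt x y

/-- Strict convexity: equality in the tangent line inequality forces `x = y`. -/
lemma tangent_eq {x y : ℝ}
    (h : Real.sqrt (1 + y ^ 2) + y * (x - y) / Real.sqrt (1 + y ^ 2)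
      = Real.sqrt (1 + x ^ 2)) : x = y := by
  have hy : 0 < Real.sqrt (1 + y ^ 2) := Real.sqrt_pos.mpr (by positivity)
  have hsqy : Real.sqrt (1 + y ^ 2) ^ 2 = 1 + y ^ 2 := Real.sq_sqrt (by positivity)
  have hsqx : Real.sqrt (1 + x ^ 2) ^ 2 = 1 + x ^ 2 := Real.sq_sqrt (by positivity)
  have h1 : Real.sqrt (1 + y ^ 2) + y * (x - y) / Real.sqrt (1 + y ^ 2)
      = (1 + x * y) / Real.sqrt (1 + y ^ 2) := by
    field_simp
    linarith [hsqy]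
  rw [h1] at h
  have h2 : 1 + x * y = Real.sqrt (1 + x ^ 2) * Real.sqrt (1 + y ^ 2) := by
    field_simp at h
    linarith [h]
  have h3 : (1 + x * y) ^ 2 = (1 + x ^ 2) * (1 + y ^ 2) := by
    rw [h2, mul_pow, hsqx, hsqy]
  have h4 : (x - y) ^ 2 = 0 := by nlinarith [h3]
  have h5 : x - y = 0 := by
    exact pow_eq_zero_iff (by norm_num : (2:ℕ) ≠ 0) |>.mp h4
  linarith [h5]


/-- The strictly convex weight function. -/
noncomputable def phiAux : ℝ → ℝ := fun t => Real.sqrt (1 + t ^ 2)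

lemma phiAux_cont : Continuous phiAux := by
  unfold phiAux; fun_prop

lemma phiAux_nonneg (t : ℝ) : 0 ≤ phiAux t := Real.sqrt_nonneg _

lemma phiAux_le (t : ℝ) : phiAux t ≤ 1 + |t| := by
  have h1 : (1 + t ^ 2) ≤ (1 + |t|) ^ 2 := by nlinarith [abs_nonneg t, sq_abs t]
  calc phiAux t ≤ Real.sqrt ((1 + |t|) ^ 2) := Real.sqrt_le_sqrt h1
    _ = 1 + |t| := Real.sqrt_sq (by positivity)

lemma phiAux_tangent_le (x y : ℝ) :
    phiAux y + y * (x - y) / phiAux y ≤ phiAux x := tangent_le x y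

lemma phiAux_tangent_eq {x y : ℝ}
    (h : phiAux y + y * (x - y) / phiAux y = phiAux x) : x = y := tangent_eq h

end AuxProof


/-- Lemma `d20`: a stationary `L^r`-integrable field that is P-a.s.
harmonic for the discrete Laplacian is P-a.s. constant, equal to `E_P[u(·,0)]`. -/
theorem stationary_harmonic_constant
    (d : ℕ) (hd : 2 ≤ d)
    (P : Measure (Env d)) [IsProbabilityMeasure P]
    (hstat : Stationary P) (herg : ErgodicEnv P)
    (r : ℝ) (hr : 1 ≤ r)
    (u : Env d → Zd d → ℝ) (hu : StatP P u)
    (hint : MemLp (fun ω => u ω 0) (ENNReal.ofReal r) P)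
    (hharm : ∀ᵐ ω ∂P, ∀ x : Zd d, lap (u ω) x = 0) :
    ∀ᵐ ω ∂P, ∀ x : Zd d, u ω x = ∫ ω', u ω' 0 ∂P := by
  classical
  set g : Env d → ℝ := fun ω => u ω 0 with hgdef
  have hgm : Measurable g := hu.1.comp (measurable_id.prodMk measurable_const)
  have hgint : Integrable g P := hint.integrable (ENNReal.one_le_ofReal.mpr hr)
  have hφgint : Integrable (fun ω => phiAux (g ω)) P := by
    apply Integrable.mono' ((integrable_const (1 : ℝ)).add hgint.abs)
      ((phiAux_cont.measurable.comp hgm).aestronglyMeasurable)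
    filter_upwards with ω
    show ‖phiAux (g ω)‖ ≤ 1 + |g ω|
    rw [Real.norm_eq_abs, abs_of_nonneg (phiAux_nonneg _)]
    exact phiAux_le _
  have hcompint : ∀ a : Zd d, Integrable (fun ω => phiAux (g (shiftEnv a ω))) P := by
    intro a
    exact ((hstat a).integrable_comp hφgint.aestronglyMeasurable).mpr hφgint
  have hcompeq : ∀ a : Zd d,
      ∫ ω, phiAux (g (shiftEnv a ω)) ∂P = ∫ ω, phiAux (g ω) ∂P := by
    intro a
    exact MeasurePreserving.integral_comp (hstat a) (shiftEquiv a).measurableEmbedding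
      (fun ω => phiAux (g ω))
  -- the mean value property at the level of the environment
  have hmean : ∀ᵐ ω ∂P,
      ∑ i : Fin d, (g (shiftEnv (unitVec i) ω) + g (shiftEnv (-(unitVec i)) ω))
        = 2 * (d : ℝ) * g ω := by
    filter_upwards [hharm, hu.2] with ω h1 h2
    have h0 := h1 0
    unfold lap at h0
    rw [neg_eq_zero] at h0
    have e1 : ∀ v : Zd d, u ω v = g (shiftEnv v ω) := fun v => h2 v
    have e2 : ∀ i : Fin d, dGradStar i (dGrad i (u ω)) 0
        = 2 * g ω - (g (shiftEnv (unitVec i) ω) + g (shiftEnv (-(unitVec i)) ω)) := by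
      intro i
      show (u ω ((0 : Zd d) - unitVec i + unitVec i) - u ω ((0 : Zd d) - unitVec i))
          - (u ω ((0 : Zd d) + unitVec i) - u ω 0) = _
      have p1 : (0 : Zd d) - unitVec i + unitVec i = 0 := by abel
      have p2 : (0 : Zd d) - unitVec i = -(unitVec i) := zero_sub _
      have p3 : (0 : Zd d) + unitVec i = unitVec i := zero_add _
      have hz : u ω 0 = g ω := rfl
      rw [p1, p2, p3, e1 (unitVec i), e1 (-(unitVec i)), hz]
      ring
    rw [Finset.sum_congr rfl (fun i _ => e2 i), Finset.sum_sub_distrib,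
      Finset.sum_const, Finset.card_univ, Fintype.card_fin, nsmul_eq_mul] at h0
    linarith [h0]
  -- the defect function H
  set H : Env d → ℝ := fun ω =>
    (∑ i : Fin d, (phiAux (g (shiftEnv (unitVec i) ω)) + phiAux (g (shiftEnv (-(unitVec i)) ω))))
      - 2 * (d : ℝ) * phiAux (g ω) with hHdef
  have hpair : ∀ i : Fin d, Integrable (fun ω =>
      phiAux (g (shiftEnv (unitVec i) ω)) + phiAux (g (shiftEnv (-(unitVec i)) ω))) P :=
    fun i => (hcompint _).add (hcompint _)
  have hSint : Integrable (fun ω => ∑ i : Fin d,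
      (phiAux (g (shiftEnv (unitVec i) ω)) + phiAux (g (shiftEnv (-(unitVec i)) ω)))) P :=
    integrable_finset_sum _ (fun i _ => hpair i)
  have hHint : Integrable H P := hSint.sub (hφgint.const_mul _)
  have hHzero : ∫ ω, H ω ∂P = 0 := by
    simp only [hHdef]
    rw [integral_sub hSint (hφgint.const_mul _),
      integral_finset_sum _ (fun i _ => hpair i)]
    have e3 : ∀ i : Fin d,
        ∫ ω, (phiAux (g (shiftEnv (unitVec i) ω)) + phiAux (g (shiftEnv (-(unitVec i)) ω))) ∂P
        = 2 * ∫ ω, phiAux (g ω) ∂P := by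
      intro i
      rw [integral_add (hcompint _) (hcompint _), hcompeq, hcompeq]; ring
    rw [Finset.sum_congr rfl (fun i _ => e3 i), Finset.sum_const, Finset.card_univ,
      Fintype.card_fin, nsmul_eq_mul, integral_const_mul]
    ring
  -- pointwise decomposition of H as a sum of nonnegative defects
  have hdecomp : ∀ ω : Env d,
      (∑ i : Fin d, (g (shiftEnv (unitVec i) ω) + g (shiftEnv (-(unitVec i)) ω))
        = 2 * (d : ℝ) * g ω) →
      ∑ i : Fin d,
        (((phiAux (g (shiftEnv (unitVec i) ω)) + phiAux (g (shiftEnv (-(unitVec i)) ω)))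
            - 2 * phiAux (g ω))
          - (g ω / phiAux (g ω))
            * ((g (shiftEnv (unitVec i) ω) + g (shiftEnv (-(unitVec i)) ω)) - 2 * g ω))
        = H ω := by
    intro ω S
    have h2 : ∑ i : Fin d,
        ((g (shiftEnv (unitVec i) ω) + g (shiftEnv (-(unitVec i)) ω)) - 2 * g ω) = 0 := by
      rw [Finset.sum_sub_distrib, Finset.sum_const, Finset.card_univ, Fintype.card_fin,
        nsmul_eq_mul, S]
      ring
    rw [Finset.sum_sub_distrib, ← Finset.mul_sum, h2, mul_zero, sub_zero,
      Finset.sum_sub_distrib, Finset.sum_const, Finset.card_univ, Fintype.card_fin,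
      nsmul_eq_mul]
    simp only [hHdef]
    ring
  have hterm_nn : ∀ (ω : Env d) (i : Fin d),
      0 ≤ ((phiAux (g (shiftEnv (unitVec i) ω)) + phiAux (g (shiftEnv (-(unitVec i)) ω)))
            - 2 * phiAux (g ω))
          - (g ω / phiAux (g ω))
            * ((g (shiftEnv (unitVec i) ω) + g (shiftEnv (-(unitVec i)) ω)) - 2 * g ω) := by
    intro ω i
    have t1 := phiAux_tangent_le (g (shiftEnv (unitVec i) ω)) (g ω)
    have t2 := phiAux_tangent_le (g (shiftEnv (-(unitVec i)) ω)) (g ω)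
    have e : (g ω / phiAux (g ω))
          * ((g (shiftEnv (unitVec i) ω) + g (shiftEnv (-(unitVec i)) ω)) - 2 * g ω)
        = g ω * (g (shiftEnv (unitVec i) ω) - g ω) / phiAux (g ω)
          + g ω * (g (shiftEnv (-(unitVec i)) ω) - g ω) / phiAux (g ω) := by
      ring
    linarith [t1, t2, e]
  have hHnn : 0 ≤ᵐ[P] H := by
    filter_upwards [hmean] with ω S
    rw [← hdecomp ω S]
    exact Finset.sum_nonneg fun i _ => hterm_nn ω i
  have hH0 : H =ᵐ[P] 0 := (integral_eq_zero_iff_of_nonneg_ae hHnn hHint).mp hHzero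
  -- extraction: each shifted copy agrees with g a.e.
  have hgen : ∀ᵐ ω ∂P, ∀ i : Fin d,
      g (shiftEnv (unitVec i) ω) = g ω ∧ g (shiftEnv (-(unitVec i)) ω) = g ω := by
    filter_upwards [hmean, hH0] with ω S hz
    intro i
    have hsum0 : ∑ i : Fin d,
        (((phiAux (g (shiftEnv (unitVec i) ω)) + phiAux (g (shiftEnv (-(unitVec i)) ω)))
            - 2 * phiAux (g ω))
          - (g ω / phiAux (g ω))
            * ((g (shiftEnv (unitVec i) ω) + g (shiftEnv (-(unitVec i)) ω)) - 2 * g ω)) = 0 := by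
      rw [hdecomp ω S]
      exact hz
    have hδ0 := (Finset.sum_eq_zero_iff_of_nonneg (fun j _ => hterm_nn ω j)).mp hsum0 i
      (Finset.mem_univ i)
    have t1 := phiAux_tangent_le (g (shiftEnv (unitVec i) ω)) (g ω)
    have t2 := phiAux_tangent_le (g (shiftEnv (-(unitVec i)) ω)) (g ω)
    have e : (g ω / phiAux (g ω))
          * ((g (shiftEnv (unitVec i) ω) + g (shiftEnv (-(unitVec i)) ω)) - 2 * g ω)
        = g ω * (g (shiftEnv (unitVec i) ω) - g ω) / phiAux (g ω)
          + g ω * (g (shiftEnv (-(unitVec i)) ω) - g ω) / phiAux (g ω) := by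
      ring
    constructor
    · exact phiAux_tangent_eq (by linarith [hδ0, t1, t2, e])
    · exact phiAux_tangent_eq (by linarith [hδ0, t1, t2, e])
  have hgenp : ∀ i : Fin d, (fun ω => g (shiftEnv (unitVec i) ω)) =ᵐ[P] g := by
    intro i
    filter_upwards [hgen] with ω hω
    exact (hω i).1
  have hgenm : ∀ i : Fin d, (fun ω => g (shiftEnv (-(unitVec i)) ω)) =ᵐ[P] g := by
    intro i
    filter_upwards [hgen] with ω hω
    exact (hω i).2
  have hinvall : ∀ a : Zd d, (fun ω => g (shiftEnv a ω)) =ᵐ[P] g :=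
    shift_ae_inv_all hstat hgenp hgenm
  -- the distribution function takes values in {0,1}
  have hd01 : ∀ t : ℝ, P {ω | t < g ω} = 0 ∨ P {ω | t < g ω} = 1 := by
    intro t
    apply erg_dichotomy hstat herg (measurableSet_lt measurable_const hgm)
    intro a
    filter_upwards [hinvall a] with ω hω
    show t < g (shiftEnv a ω) ↔ t < g ω
    rw [show g (shiftEnv a ω) = g ω from hω]
  -- extract the essential value
  set T : Set ℝ := {t : ℝ | P {ω | t < g ω} = 0} with hTdef
  have hTne : T.Nonempty := by
    by_contra hne
    rw [Set.not_nonempty_iff_eq_empty] at hne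
    have hall : ∀ n : ℕ, P {ω | (n : ℝ) < g ω} = 1 := by
      intro n
      refine (hd01 (n : ℝ)).resolve_left fun h0 => ?_
      have : ((n : ℝ) : ℝ) ∈ T := h0
      rw [hne] at this
      exact this
    have hnull : ∀ n : ℕ, P {ω | g ω ≤ (n : ℝ)} = 0 := by
      intro n
      have hm : MeasurableSet {ω | (n : ℝ) < g ω} := measurableSet_lt measurable_const hgm
      have hc : {ω | g ω ≤ (n : ℝ)} = {ω | (n : ℝ) < g ω}ᶜ := by
        ext ω; simp [not_lt]
      rw [hc]
      exact (prob_compl_eq_zero_iff hm).mpr (hall n)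
    have hU : P (⋃ n : ℕ, {ω | g ω ≤ (n : ℝ)}) = 0 := measure_iUnion_null hnull
    have huniv : (⋃ n : ℕ, {ω : Env d | g ω ≤ (n : ℝ)}) = Set.univ := by
      ext ω
      simp only [Set.mem_iUnion, Set.mem_setOf_eq, Set.mem_univ, iff_true]
      exact exists_nat_ge (g ω)
    rw [huniv, measure_univ] at hU
    exact one_ne_zero hU
  have hTbd : BddBelow T := by
    have h2 : ∃ n : ℕ, P {ω | -(n : ℝ) < g ω} = 1 := by
      by_contra hne
      push_neg at hne
      have hall : ∀ n : ℕ, P {ω | -(n : ℝ) < g ω} = 0 := fun n =>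
        (hd01 _).resolve_right (hne n)
      have hU : P (⋃ n : ℕ, {ω | -(n : ℝ) < g ω}) = 0 := measure_iUnion_null hall
      have huniv : (⋃ n : ℕ, {ω : Env d | -(n : ℝ) < g ω}) = Set.univ := by
        ext ω
        simp only [Set.mem_iUnion, Set.mem_setOf_eq, Set.mem_univ, iff_true]
        obtain ⟨n, hn⟩ := exists_nat_gt (-g ω)
        exact ⟨n, by linarith⟩
      rw [huniv, measure_univ] at hU
      exact one_ne_zero hU
    obtain ⟨n₀, hn₀⟩ := h2
    refine ⟨-(n₀ : ℝ), fun t ht => ?_⟩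
    by_contra hlt
    push_neg at hlt
    have hsub : {ω : Env d | -(n₀ : ℝ) < g ω} ⊆ {ω | t < g ω} :=
      fun ω hω => lt_trans hlt hω
    have hmono := measure_mono (μ := P) hsub
    rw [hn₀, ht] at hmono
    simp at hmono
  set c₀ : ℝ := sInf T with hc₀def
  have hub : ∀ t : ℝ, c₀ < t → P {ω | t < g ω} = 0 := by
    intro t ht
    obtain ⟨s, hsT, hst⟩ := exists_lt_of_csInf_lt hTne ht
    exact measure_mono_null (fun ω hω => lt_trans hst hω) hsT
  have hlb : ∀ t : ℝ, t < c₀ → P {ω | t < g ω} = 1 := by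
    intro t ht
    refine (hd01 t).resolve_left fun h0 => ?_
    exact absurd (csInf_le hTbd h0) (not_le.mpr ht)
  have hle : ∀ᵐ ω ∂P, g ω ≤ c₀ := by
    have hnull : P {ω | c₀ < g ω} = 0 := by
      have hcover : {ω : Env d | c₀ < g ω}
          = ⋃ n : ℕ, {ω | c₀ + 1 / ((n : ℝ) + 1) < g ω} := by
        ext ω
        simp only [Set.mem_iUnion, Set.mem_setOf_eq]
        constructor
        · intro h
          obtain ⟨n, hn⟩ := exists_nat_one_div_lt (sub_pos.mpr h)
          exact ⟨n, by linarith⟩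
        · rintro ⟨n, hn⟩
          have hpos : 0 < 1 / ((n : ℝ) + 1) := by positivity
          linarith
      rw [hcover]
      refine measure_iUnion_null fun n => hub _ ?_
      have hpos : 0 < 1 / ((n : ℝ) + 1) := by positivity
      linarith
    rw [ae_iff]
    convert hnull using 2
    ext ω
    simp [not_le]
  have hge : ∀ᵐ ω ∂P, c₀ ≤ g ω := by
    have hnull2 : ∀ n : ℕ, P {ω | g ω ≤ c₀ - 1 / ((n : ℝ) + 1)} = 0 := by
      intro n
      have hpos : 0 < 1 / ((n : ℝ) + 1) := by positivity
      have h1 := hlb (c₀ - 1 / ((n : ℝ) + 1)) (by linarith)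
      have hm : MeasurableSet {ω : Env d | c₀ - 1 / ((n : ℝ) + 1) < g ω} :=
        measurableSet_lt measurable_const hgm
      have hc : {ω : Env d | g ω ≤ c₀ - 1 / ((n : ℝ) + 1)}
          = {ω | c₀ - 1 / ((n : ℝ) + 1) < g ω}ᶜ := by
        ext ω; simp [not_lt]
      rw [hc]
      exact (prob_compl_eq_zero_iff hm).mpr h1
    have hnull : P {ω | g ω < c₀} = 0 := by
      have hcover : {ω : Env d | g ω < c₀}
          = ⋃ n : ℕ, {ω | g ω ≤ c₀ - 1 / ((n : ℝ) + 1)} := by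
        ext ω
        simp only [Set.mem_iUnion, Set.mem_setOf_eq]
        constructor
        · intro h
          obtain ⟨n, hn⟩ := exists_nat_one_div_lt (sub_pos.mpr h)
          exact ⟨n, by linarith⟩
        · rintro ⟨n, hn⟩
          have hpos : 0 < 1 / ((n : ℝ) + 1) := by positivity
          linarith
      rw [hcover]
      exact measure_iUnion_null hnull2
    rw [ae_iff]
    convert hnull using 2
    ext ω
    simp [not_le]
  have hconst : g =ᵐ[P] fun _ => c₀ := by
    filter_upwards [hle, hge] with ω h1 h2
    exact le_antisymm h1 h2
  have hcint : ∫ ω, g ω ∂P = c₀ := by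
    rw [integral_congr_ae hconst]
    simp [measure_univ]
  have hx : ∀ x : Zd d, ∀ᵐ ω ∂P, g (shiftEnv x ω) = c₀ := fun x =>
    (hinvall x).trans hconst
  have hxx : ∀ᵐ ω ∂P, ∀ x : Zd d, g (shiftEnv x ω) = c₀ := ae_all_iff.mpr hx
  filter_upwards [hxx, hu.2] with ω h1 h2
  intro x
  rw [h2 x]
  show g (shiftEnv x ω) = ∫ ω', g ω' ∂P
  rw [hcint]
  exact h1 x


end
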